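/- arXiv:2306.15883 — 2 statements merged into one kernel-verified Lean document; each statement's English description precedes it below -/
import Mathlib

section
/- Let l ≥ 1, let n₁, …, n_l be positive integers, a₁, …, a_l integers, and let n be a further positive integer and a a further integer. Define Z(t) := exp(∑_{m≥1} (1/m) (∏_{i=1}^{l} (1 + (−1)^{n_i} a_i^m)) t^m) ∈ ℚ⟦t⟧ and Z'(t) := exp(∑_{m≥1} (1/m) (∏_{i=1}^{l} (1 + (−1)^{n_i} a_i^m)) (1 + (−1)^n a^m) t^m) ∈ ℚ⟦t⟧. Then Z'(t) = Z(t) · (Z(a t))^{(−1)^n}, where Z(a t) denotes the rescaling of Z by a (substituting a·t for t), i.e. Z' = Z · rescale_a(Z) if n is even and Z' = Z · (rescale_a(Z))^{−1} if n is odd. -/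
open PowerSeries Finset

/-- Formal exponential of a power series (the genuine exponential composition when the
constant coefficient of `g` is zero). -/
noncomputable def psExp (g : PowerSeries ℚ) : PowerSeries ℚ :=
  PowerSeries.mk fun n =>
    PowerSeries.coeff n (∑ k ∈ Finset.range (n + 1), (k.factorial : ℚ)⁻¹ • g ^ k)

lemma coeff_psExp (g : PowerSeries ℚ) (m : ℕ) :
    PowerSeries.coeff m (psExp g) =
      ∑ k ∈ Finset.range (m + 1), (k.factorial : ℚ)⁻¹ * PowerSeries.coeff m (g ^ k) := by
  simp [psExp, PowerSeries.coeff_mk]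

lemma coeff_pow_eq_zero {g : PowerSeries ℚ} (hg : constantCoeff g = 0)
    {m k : ℕ} (h : m < k) : PowerSeries.coeff m (g ^ k) = 0 := by
  have : (X : PowerSeries ℚ) ^ k ∣ g ^ k := pow_dvd_pow_of_dvd (X_dvd_iff.2 hg) k
  exact (X_pow_dvd_iff.1 this) m h

lemma constCoeff_psExp (g : PowerSeries ℚ) : constantCoeff (psExp g) = 1 := by
  have := coeff_psExp g 0
  simp only [PowerSeries.coeff_zero_eq_constantCoeff] at this
  simp [this]

lemma psExp_sub_trunc (g : PowerSeries ℚ) (hg : constantCoeff g = 0) (N : ℕ) :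
    (X : PowerSeries ℚ) ^ (N + 1) ∣
      psExp g - ∑ k ∈ Finset.range (N + 1), (k.factorial : ℚ)⁻¹ • g ^ k := by
  rw [X_pow_dvd_iff]
  intro m hm
  rw [map_sub, coeff_psExp, map_sum]
  have hsplit : Finset.range (N + 1) = Finset.range (m + 1) ∪ Finset.Ico (m + 1) (N + 1) := by
    rw [Finset.range_eq_Ico, Finset.range_eq_Ico, Finset.Ico_union_Ico_eq_Ico] <;> omega
  rw [hsplit, Finset.sum_union (by simp [Finset.disjoint_left]; omega)]
  have h2 : ∀ k ∈ Finset.Ico (m + 1) (N + 1),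
      PowerSeries.coeff m ((k.factorial : ℚ)⁻¹ • g ^ k) = 0 := by
    intro k hk
    simp only [Finset.mem_Ico] at hk
    rw [PowerSeries.coeff_smul, coeff_pow_eq_zero hg (by omega), smul_zero]
  rw [Finset.sum_eq_zero h2, add_zero]
  simp [PowerSeries.coeff_smul, smul_eq_mul]

lemma coeff_eq_of_X_pow_dvd {m : ℕ} {f f' : PowerSeries ℚ}
    (hd : (X : PowerSeries ℚ) ^ (m + 1) ∣ f - f') :
    PowerSeries.coeff m f = PowerSeries.coeff m f' := by
  have := X_pow_dvd_iff.1 hd m (Nat.lt_succ_self m)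
  rwa [map_sub, sub_eq_zero] at this

lemma coeff_mul_pow_eq_zero {g h : PowerSeries ℚ} (hg : constantCoeff g = 0)
    (hh : constantCoeff h = 0) {m j i : ℕ} (hlt : m < j + i) :
    PowerSeries.coeff m (g ^ j * h ^ i) = 0 := by
  have : (X : PowerSeries ℚ) ^ (j + i) ∣ g ^ j * h ^ i := by
    rw [pow_add]
    exact mul_dvd_mul (pow_dvd_pow_of_dvd (X_dvd_iff.2 hg) j)
      (pow_dvd_pow_of_dvd (X_dvd_iff.2 hh) i)
  exact (X_pow_dvd_iff.1 this) m hlt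

lemma psExp_add (g h : PowerSeries ℚ) (hg : constantCoeff g = 0)
    (hh : constantCoeff h = 0) : psExp (g + h) = psExp g * psExp h := by
  ext m
  set Tg := ∑ k ∈ Finset.range (m + 1), (k.factorial : ℚ)⁻¹ • g ^ k with hTg
  set Th := ∑ k ∈ Finset.range (m + 1), (k.factorial : ℚ)⁻¹ • h ^ k with hTh
  set Ts := ∑ k ∈ Finset.range (m + 1), (k.factorial : ℚ)⁻¹ • (g + h) ^ k with hTs
  have e1 : PowerSeries.coeff m (psExp (g + h)) = PowerSeries.coeff m Ts :=
    coeff_eq_of_X_pow_dvd (psExp_sub_trunc (g + h) (by simp [hg, hh]) m)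
  have e2 : PowerSeries.coeff m (psExp g * psExp h) = PowerSeries.coeff m (Tg * Th) := by
    apply coeff_eq_of_X_pow_dvd
    have hid : psExp g * psExp h - Tg * Th =
        (psExp g - Tg) * psExp h + Tg * (psExp h - Th) := by ring
    rw [hid]
    exact dvd_add ((psExp_sub_trunc g hg m).mul_right _)
      ((psExp_sub_trunc h hh m).mul_left _)
  rw [e1, e2]
  -- now the combinatorial identity
  set F : ℕ → ℕ → ℚ := fun j i =>
    ((j.factorial : ℚ) * i.factorial)⁻¹ * PowerSeries.coeff m (g ^ j * h ^ i) with hF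
  have hFzero : ∀ j i, m < j + i → F j i = 0 := by
    intro j i hlt
    simp [hF, coeff_mul_pow_eq_zero hg hh hlt]
  have lhs_eq : PowerSeries.coeff m Ts =
      ∑ k ∈ Finset.range (m + 1), ∑ p ∈ Finset.HasAntidiagonal.antidiagonal k, F p.1 p.2 := by
    rw [hTs, map_sum]
    refine Finset.sum_congr rfl fun k hk => ?_
    rw [Finset.Nat.sum_antidiagonal_eq_sum_range_succ F, PowerSeries.coeff_smul, add_pow,
      map_sum, Finset.smul_sum]
    refine Finset.sum_congr rfl fun j hj => ?_
    simp only [Finset.mem_range, Nat.lt_succ_iff] at hj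
    have hfact : (k.factorial : ℚ)⁻¹ * (k.choose j : ℚ) =
        ((j.factorial : ℚ) * ((k - j).factorial : ℚ))⁻¹ := by
      have h1 : ((k.choose j : ℕ) : ℚ) * (j.factorial : ℚ) * ((k - j).factorial : ℚ)
          = (k.factorial : ℚ) := by exact_mod_cast Nat.choose_mul_factorial_mul_factorial hj
      have h2 : (j.factorial : ℚ) ≠ 0 := Nat.cast_ne_zero.2 j.factorial_ne_zero
      have h3 : ((k - j).factorial : ℚ) ≠ 0 := Nat.cast_ne_zero.2 (k - j).factorial_ne_zero
      have h4 : (k.factorial : ℚ) ≠ 0 := Nat.cast_ne_zero.2 k.factorial_ne_zero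
      field_simp
      linear_combination h1
    have hflip : (g ^ j * h ^ (k - j) * (k.choose j : ℚ⟦X⟧)) =
        (k.choose j : ℕ) • (g ^ j * h ^ (k - j)) := by
      rw [nsmul_eq_mul, mul_comm]
    rw [hflip, map_nsmul]
    simp only [hF, smul_eq_mul, nsmul_eq_mul]
    rw [← mul_assoc, hfact]
  have rhs_eq : PowerSeries.coeff m (Tg * Th) =
      ∑ j ∈ Finset.range (m + 1), ∑ i ∈ Finset.range (m + 1), F j i := by
    rw [hTg, hTh, Finset.sum_mul_sum, map_sum]
    refine Finset.sum_congr rfl fun j hj => ?_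
    rw [map_sum]
    refine Finset.sum_congr rfl fun i hi => ?_
    rw [smul_mul_smul_comm, PowerSeries.coeff_smul]
    simp only [hF, smul_eq_mul, mul_inv]
  rw [lhs_eq, rhs_eq]
  set S := (Finset.range (m + 1) ×ˢ Finset.range (m + 1)).filter
    (fun p : ℕ × ℕ => p.1 + p.2 ≤ m) with hS
  have hdisj : (↑(Finset.range (m + 1)) : Set ℕ).PairwiseDisjoint Finset.HasAntidiagonal.antidiagonal := by
    intro x _ y _ hxy
    simp only [Finset.disjoint_left, Finset.HasAntidiagonal.mem_antidiagonal]
    intro p hp hq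
    exact hxy (hp ▸ hq ▸ rfl)
  have hbi : (Finset.range (m + 1)).biUnion Finset.HasAntidiagonal.antidiagonal = S := by
    ext p
    simp only [hS, Finset.mem_biUnion, Finset.mem_range, Finset.HasAntidiagonal.mem_antidiagonal,
      Finset.mem_filter, Finset.mem_product]
    constructor
    · rintro ⟨k, hk, he⟩; omega
    · intro hp; exact ⟨p.1 + p.2, by omega, rfl⟩
  rw [← Finset.sum_biUnion hdisj, hbi]
  have hprod : ∑ j ∈ Finset.range (m + 1), ∑ i ∈ Finset.range (m + 1), F j i
      = ∑ p ∈ Finset.range (m + 1) ×ˢ Finset.range (m + 1), F p.1 p.2 := by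
    rw [Finset.sum_product]
  have hzero : ∑ p ∈ (Finset.range (m + 1) ×ˢ Finset.range (m + 1)).filter
      (fun p : ℕ × ℕ => ¬ p.1 + p.2 ≤ m), F p.1 p.2 = 0 := by
    refine Finset.sum_eq_zero fun p hp => ?_
    simp only [Finset.mem_filter, not_le] at hp
    exact hFzero p.1 p.2 hp.2
  rw [hprod, ← Finset.sum_filter_add_sum_filter_not
    (Finset.range (m + 1) ×ˢ Finset.range (m + 1)) (fun p : ℕ × ℕ => p.1 + p.2 ≤ m),
    hzero, add_zero, hS]

lemma rescale_psExp (c : ℚ) (g : PowerSeries ℚ) :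
    PowerSeries.rescale c (psExp g) = psExp (PowerSeries.rescale c g) := by
  ext m
  rw [PowerSeries.coeff_rescale, coeff_psExp, coeff_psExp, Finset.mul_sum]
  refine Finset.sum_congr rfl fun k hk => ?_
  rw [← map_pow, PowerSeries.coeff_rescale]
  ring

/-- Inductive step for the zeta function of a product of spheres: adjoining one further
sphere `Sⁿ` with basic eigenvalue `a` gives `Z'(t) = Z(t) · Z(at)^{(-1)ⁿ}`. -/
theorem lefschetz_zeta_inductive_step
    (l : ℕ) (hl : 1 ≤ l) (n : Fin l → ℕ) (hn : ∀ i, 0 < n i) (a : Fin l → ℤ)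
    (n' : ℕ) (hn' : 0 < n') (a' : ℤ) :
    psExp (PowerSeries.mk fun m =>
        if m = 0 then 0 else
          (1 / m : ℚ) * (∏ i, (1 + (-1) ^ n i * (a i : ℚ) ^ m)) *
            (1 + (-1) ^ n' * (a' : ℚ) ^ m)) =
      psExp (PowerSeries.mk fun m =>
          if m = 0 then 0 else
            (1 / m : ℚ) * (∏ i, (1 + (-1) ^ n i * (a i : ℚ) ^ m))) *
        (if Even n' then
            PowerSeries.rescale (a' : ℚ)
              (psExp (PowerSeries.mk fun m =>
                if m = 0 then 0 else
                  (1 / m : ℚ) * (∏ i, (1 + (-1) ^ n i * (a i : ℚ) ^ m))))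
         else
            (PowerSeries.rescale (a' : ℚ)
              (psExp (PowerSeries.mk fun m =>
                if m = 0 then 0 else
                  (1 / m : ℚ) * (∏ i, (1 + (-1) ^ n i * (a i : ℚ) ^ m)))))⁻¹) := by
  set g : PowerSeries ℚ := PowerSeries.mk fun m =>
    if m = 0 then 0 else (1 / m : ℚ) * (∏ i, (1 + (-1) ^ n i * (a i : ℚ) ^ m)) with hgdef
  set f : PowerSeries ℚ := PowerSeries.mk fun m =>
    if m = 0 then 0 else (1 / m : ℚ) * (∏ i, (1 + (-1) ^ n i * (a i : ℚ) ^ m)) *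
      (1 + (-1) ^ n' * (a' : ℚ) ^ m) with hfdef
  have hg0 : constantCoeff g = 0 := by
    rw [hgdef, ← PowerSeries.coeff_zero_eq_constantCoeff, PowerSeries.coeff_mk]
    simp
  have hr0 : constantCoeff (PowerSeries.rescale (a' : ℚ) g) = 0 := by
    rw [← PowerSeries.coeff_zero_eq_constantCoeff, PowerSeries.coeff_rescale]
    simpa using hg0
  by_cases hpar : Even n'
  · have hsign : ((-1 : ℚ)) ^ n' = 1 := hpar.neg_one_pow
    have hf : f = g + PowerSeries.rescale (a' : ℚ) g := by
      ext m
      simp only [hfdef, hgdef, map_add, PowerSeries.coeff_mk, PowerSeries.coeff_rescale, hsign]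
      split_ifs with hm
      · ring
      · ring
    rw [if_pos hpar, hf, psExp_add g _ hg0 hr0, rescale_psExp]
  · have hsign : ((-1 : ℚ)) ^ n' = -1 := (Nat.odd_iff.2 (Nat.not_even_iff.1 hpar)).neg_one_pow
    have hf : f = g - PowerSeries.rescale (a' : ℚ) g := by
      ext m
      simp only [hfdef, hgdef, map_sub, PowerSeries.coeff_mk, PowerSeries.coeff_rescale, hsign]
      split_ifs with hm
      · ring
      · ring
    have hc : constantCoeff (PowerSeries.rescale (a' : ℚ) (psExp g)) ≠ 0 := by
      rw [rescale_psExp, constCoeff_psExp]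
      exact one_ne_zero
    rw [if_neg hpar, PowerSeries.eq_mul_inv_iff_mul_eq hc, rescale_psExp, hf,
      ← psExp_add _ _ (by rw [map_sub, hg0, hr0, sub_zero]) hr0, sub_add_cancel]
end

section
/- Let l ≥ 1, let n₁, …, n_l be positive integers and a₁, …, a_l integers. Assume: (i) there is some i with n_i odd and a_i = −1; (ii) there is some j with |a_j| > 1; (iii) a_k ≠ −1 for every k with n_k even; and (iv) a_k ≠ 1 for every k with n_k odd. Then ℓ(m) = 0 whenever 4 ∣ m, and there exists N > 0 such that for every odd integer m > N one has ℓ(m) ≠ 0 and ℓ(2m) ≠ 0, where ℓ(m) := ∑_{r ∣ m} μ(m/r) ∏_{i=1}^{l} (1 + (−1)^{n_i} a_i^r). -/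
open Finset

private lemma aux_factor_ne_zero {n : ℕ} {a : ℤ} (h3 : Even n → a ≠ -1)
    (h4 : Odd n → a ≠ 1) {r : ℕ} (hr : Odd r) : 1 + (-1) ^ n * a ^ r ≠ 0 := by
  rcases Nat.even_or_odd n with he | ho
  · rw [he.neg_one_pow, one_mul]
    intro h
    have hpow : a ^ r = -1 := by linarith
    have hu : IsUnit a := isUnit_of_dvd_one (by
      have h1 : a ∣ a ^ r := dvd_pow_self a hr.pos.ne'
      rw [hpow] at h1
      exact (dvd_neg).mp h1)
    rcases Int.isUnit_iff.mp hu with rfl | rfl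
    · simp at hpow
    · exact h3 he rfl
  · rw [ho.neg_one_pow, neg_one_mul] at *
    intro h
    have hpow : a ^ r = 1 := by linarith
    have hu : IsUnit a := isUnit_of_dvd_one (hpow ▸ dvd_pow_self a hr.pos.ne')
    rcases Int.isUnit_iff.mp hu with rfl | rfl
    · exact h4 ho rfl
    · rw [hr.neg_one_pow] at hpow; norm_num at hpow

private lemma aux_factor_lower {n : ℕ} {a : ℤ} (h3 : Even n → a ≠ -1)
    (h4 : Odd n → a ≠ 1) {r : ℕ} (hr : Odd r) :
    (max 1 |a|) ^ r ≤ 2 * |1 + (-1) ^ n * a ^ r| := by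
  have hne := aux_factor_ne_zero h3 h4 hr
  rcases le_or_gt |a| 1 with ha | ha
  · rw [max_eq_left ha, one_pow]
    have := Int.one_le_abs hne
    linarith
  · have ha2 : (2 : ℤ) ≤ |a| := ha
    rw [max_eq_right ha.le]
    have hxabs : |(-1 : ℤ) ^ n * a ^ r| = |a| ^ r := by
      rw [abs_mul, abs_pow, abs_pow, abs_neg, abs_one, one_pow, one_mul]
    have hsub : |(-1 : ℤ) ^ n * a ^ r| - 1 ≤ |1 + (-1) ^ n * a ^ r| := by
      calc |(-1 : ℤ) ^ n * a ^ r| - 1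
          = |(-1 : ℤ) ^ n * a ^ r| - |(-1 : ℤ)| := by norm_num
        _ ≤ |(-1 : ℤ) ^ n * a ^ r - (-1)| := abs_sub_abs_le_abs_sub _ _
        _ = |1 + (-1) ^ n * a ^ r| := by ring_nf
    have h2r : (2 : ℤ) ≤ |a| ^ r := le_trans ha2 (le_self_pow₀ (by linarith) hr.pos.ne')
    rw [hxabs] at hsub
    linarith

private lemma aux_growth (l m : ℕ) (hm : 6 * l + 9 < m) :
    4 ^ l * m < 2 ^ (m - m / 3) := by
  have h1 : m / 4 < 2 ^ (m / 4) := Nat.lt_two_pow_self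
  have h2 : m < 2 ^ (m / 4 + 2) := by
    rw [pow_add]
    omega
  have h3 : (4 : ℕ) ^ l * m < 2 ^ (2 * l + (m / 4 + 2)) := by
    rw [pow_add, show (4 : ℕ) ^ l = 2 ^ (2 * l) by rw [pow_mul]; norm_num]
    exact Nat.mul_lt_mul_of_le_of_lt le_rfl h2 (by positivity)
  refine lt_of_lt_of_le h3 (Nat.pow_le_pow_right (by norm_num) ?_)
  omega

/-- If some `nᵢ` is odd with `aᵢ = -1`, some `|aⱼ| > 1`, no even-dimensional eigenvalue
equals `-1` and no odd-dimensional eigenvalue equals `1`, then `ℓ(m) = 0` whenever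
`4 ∣ m`, while `ℓ(m) ≠ 0` and `ℓ(2m) ≠ 0` for every sufficiently large odd `m`, where
`ℓ(m) = ∑_{r∣m} μ(m/r) ∏ᵢ (1 + (-1)^{nᵢ} aᵢʳ)`. -/
theorem lefschetz_period_numbers_odd_case
    (l : ℕ) (hl : 1 ≤ l) (n : Fin l → ℕ) (hn : ∀ i, 0 < n i) (a : Fin l → ℤ)
    (h1 : ∃ i, Odd (n i) ∧ a i = -1)
    (h2 : ∃ j, 1 < |a j|)
    (h3 : ∀ k, Even (n k) → a k ≠ -1)
    (h4 : ∀ k, Odd (n k) → a k ≠ 1) :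
    (∀ m : ℕ, 0 < m → 4 ∣ m →
      (∑ r ∈ m.divisors, ArithmeticFunction.moebius (m / r) *
          ∏ i, (1 + (-1) ^ n i * a i ^ r)) = 0) ∧
    ∃ N : ℕ, 0 < N ∧ ∀ m : ℕ, N < m → Odd m →
      (∑ r ∈ m.divisors, ArithmeticFunction.moebius (m / r) *
          ∏ i, (1 + (-1) ^ n i * a i ^ r)) ≠ 0 ∧
      (∑ r ∈ (2 * m).divisors, ArithmeticFunction.moebius (2 * m / r) *
          ∏ i, (1 + (-1) ^ n i * a i ^ r)) ≠ 0 := by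
  obtain ⟨i0, hi0odd, hi0⟩ := h1
  obtain ⟨j0, hj0⟩ := h2
  set L : ℕ → ℤ := fun r => ∏ i, (1 + (-1) ^ n i * a i ^ r) with hLdef
  set P : ℤ := ∏ i, max 1 |a i| with hPdef
  -- L vanishes at even arguments
  have hLeven : ∀ r : ℕ, Even r → L r = 0 := by
    intro r hr
    refine Finset.prod_eq_zero (Finset.mem_univ i0) ?_
    rw [hi0, hi0odd.neg_one_pow, hr.neg_one_pow]
    ring
  -- basic facts about P
  have hP1 : (1 : ℤ) ≤ P := by
    rw [hPdef]
    calc (1 : ℤ) = ∏ _i : Fin l, 1 := by rw [Finset.prod_const_one]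
      _ ≤ ∏ i, max 1 |a i| :=
        Finset.prod_le_prod (fun _ _ => zero_le_one) (fun i _ => le_max_left _ _)
  have hP2 : (2 : ℤ) ≤ P := by
    rw [hPdef]
    calc (2 : ℤ) = ∏ i : Fin l, (if i = j0 then 2 else 1) := by
          rw [Finset.prod_ite_eq' Finset.univ j0 (fun _ => (2 : ℤ))]
          simp
      _ ≤ ∏ i, max 1 |a i| := by
          refine Finset.prod_le_prod (fun i _ => by split <;> norm_num) (fun i _ => ?_)
          split
          · next h => subst h; exact le_trans (by linarith) (le_max_right _ _)
          · exact le_max_left _ _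
  -- lower bound for |L m| at odd m
  have hlow : ∀ m : ℕ, Odd m → P ^ m ≤ 2 ^ l * |L m| := by
    intro m hm
    rw [hLdef, hPdef]
    calc (∏ i, max 1 |a i|) ^ m = ∏ i, (max 1 |a i|) ^ m := by
          rw [← Finset.prod_pow]
      _ ≤ ∏ i, 2 * |1 + (-1) ^ n i * a i ^ m| := by
          refine Finset.prod_le_prod (fun i _ => ?_) (fun i _ => ?_)
          · positivity
          · exact aux_factor_lower (h3 i) (h4 i) hm
      _ = 2 ^ l * |∏ i, (1 + (-1) ^ n i * a i ^ m)| := by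
          rw [Finset.prod_mul_distrib, Finset.prod_const, Finset.abs_prod]
          simp
  -- upper bound for |L r|
  have hup : ∀ r : ℕ, |L r| ≤ 2 ^ l * P ^ r := by
    intro r
    rw [hLdef, hPdef]
    calc |∏ i, (1 + (-1) ^ n i * a i ^ r)| = ∏ i, |1 + (-1) ^ n i * a i ^ r| :=
          Finset.abs_prod _ _
      _ ≤ ∏ i, 2 * (max 1 |a i|) ^ r := by
          refine Finset.prod_le_prod (fun i _ => abs_nonneg _) (fun i _ => ?_)
          have hb1 : (1 : ℤ) ≤ (max 1 |a i|) ^ r := by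
            calc (1 : ℤ) = 1 ^ r := (one_pow r).symm
              _ ≤ (max 1 |a i|) ^ r := pow_le_pow_left₀ zero_le_one (le_max_left _ _) r
          have hb2 : |a i| ^ r ≤ (max 1 |a i|) ^ r :=
            pow_le_pow_left₀ (abs_nonneg _) (le_max_right _ _) r
          calc |1 + (-1) ^ n i * a i ^ r| ≤ |(1 : ℤ)| + |(-1) ^ n i * a i ^ r| :=
                abs_add_le _ _
            _ = 1 + |a i| ^ r := by
                rw [abs_one, abs_mul, abs_pow, abs_pow, abs_neg, abs_one, one_pow, one_mul]
            _ ≤ 2 * (max 1 |a i|) ^ r := by linarith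
      _ = 2 ^ l * (∏ i, max 1 |a i|) ^ r := by
          rw [Finset.prod_mul_distrib, Finset.prod_const, ← Finset.prod_pow]
          simp
  -- part 1 : 4 ∣ m
  have part1 : ∀ m : ℕ, 0 < m → 4 ∣ m →
      (∑ r ∈ m.divisors, ArithmeticFunction.moebius (m / r) * L r) = 0 := by
    intro m hm h4m
    refine Finset.sum_eq_zero fun r hr => ?_
    obtain ⟨hrd, hm0⟩ := Nat.mem_divisors.mp hr
    rcases Nat.even_or_odd r with hre | hro
    · rw [hLeven r hre, mul_zero]
    · have hco : Nat.Coprime 4 r := by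
        have : Nat.Coprime 2 r := Nat.coprime_two_left.mpr hro
        exact (show (4:ℕ) = 2 ^ 2 by norm_num) ▸ Nat.Coprime.pow_left 2 this
      have hdvd : 4 ∣ m / r := by
        refine hco.dvd_of_dvd_mul_left ?_
        rwa [Nat.mul_div_cancel' hrd]
      have hnsq : ¬ Squarefree (m / r) := by
        intro hsq
        have := hsq 2 (by omega)
        rw [Nat.isUnit_iff] at this
        omega
      rw [ArithmeticFunction.moebius_eq_zero_of_not_squarefree hnsq, zero_mul]
  -- key nonvanishing for large odd m
  have key : ∀ m : ℕ, 6 * l + 9 < m → Odd m →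
      (∑ r ∈ m.divisors, ArithmeticFunction.moebius (m / r) * L r) ≠ 0 := by
    intro m hmN hmodd hzero
    have hm0 : 0 < m := by omega
    have hmem : m ∈ m.divisors := Nat.mem_divisors_self m hm0.ne'
    rw [← Finset.add_sum_erase _ _ hmem, Nat.div_self hm0,
      ArithmeticFunction.moebius_apply_one, one_mul] at hzero
    set T : ℤ := ∑ r ∈ m.divisors.erase m, ArithmeticFunction.moebius (m / r) * L r with hTdef
    have hLT : |L m| = |T| := by
      have : L m = -T := by linarith
      rw [this, abs_neg]
    -- bound each term of T
    have hterm : ∀ r ∈ m.divisors.erase m,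
        |ArithmeticFunction.moebius (m / r) * L r| ≤ 2 ^ l * P ^ (m / 3) := by
      intro r hr
      obtain ⟨hne, hrd⟩ := Finset.mem_erase.mp hr
      obtain ⟨hdvd, _⟩ := Nat.mem_divisors.mp hrd
      have hr0 : 0 < r := Nat.pos_of_dvd_of_pos hdvd hm0
      have hq : 3 ≤ m / r := by
        have hq1 : m / r ∣ m := Nat.div_dvd_of_dvd hdvd
        have hqodd : Odd (m / r) := hmodd.of_dvd_nat hq1  -- check name
        have hqne1 : m / r ≠ 1 := by
          intro h
          exact hne (Nat.eq_of_dvd_of_div_eq_one hdvd h)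
        rcases hqodd with ⟨k, hk⟩
        omega
      have hr3 : r ≤ m / 3 := by
        have h3r : 3 * r ≤ m :=
          le_trans (Nat.mul_le_mul_right r hq) (le_of_eq (Nat.div_mul_cancel hdvd))
        omega
      calc |ArithmeticFunction.moebius (m / r) * L r|
          = |ArithmeticFunction.moebius (m / r)| * |L r| := abs_mul _ _
        _ ≤ 1 * |L r| := by
            have := ArithmeticFunction.abs_moebius_le_one (n := m / r)
            have h0 : (0:ℤ) ≤ |L r| := abs_nonneg _
            exact mul_le_mul_of_nonneg_right this h0
        _ = |L r| := one_mul _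
        _ ≤ 2 ^ l * P ^ r := hup r
        _ ≤ 2 ^ l * P ^ (m / 3) := by
            have := pow_le_pow_right₀ hP1 hr3
            have h2l : (0:ℤ) ≤ 2 ^ l := by positivity
            exact mul_le_mul_of_nonneg_left this h2l
    have hcard : (m.divisors.erase m).card ≤ m := by
      have hsub : m.divisors.erase m ⊆ Finset.Icc 1 m := by
        intro r hr
        obtain ⟨_, hrd⟩ := Finset.mem_erase.mp hr
        obtain ⟨hdvd, _⟩ := Nat.mem_divisors.mp hrd
        have := Nat.le_of_dvd hm0 hdvd
        have := Nat.pos_of_dvd_of_pos hdvd hm0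
        exact Finset.mem_Icc.mpr ⟨by omega, by omega⟩
      calc (m.divisors.erase m).card ≤ (Finset.Icc 1 m).card := Finset.card_le_card hsub
        _ = m := by rw [Nat.card_Icc]; omega
    have hTbound : |T| ≤ (m : ℤ) * (2 ^ l * P ^ (m / 3)) := by
      calc |T| ≤ ∑ r ∈ m.divisors.erase m, |ArithmeticFunction.moebius (m / r) * L r| :=
            Finset.abs_sum_le_sum_abs _ _
        _ ≤ (m.divisors.erase m).card • (2 ^ l * P ^ (m / 3)) :=
            Finset.sum_le_card_nsmul _ _ _ hterm
        _ = ((m.divisors.erase m).card : ℤ) * (2 ^ l * P ^ (m / 3)) := nsmul_eq_mul _ _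
        _ ≤ (m : ℤ) * (2 ^ l * P ^ (m / 3)) := by
            have h0 : (0:ℤ) ≤ 2 ^ l * P ^ (m / 3) := by positivity
            exact mul_le_mul_of_nonneg_right (by exact_mod_cast hcard) h0
    -- growth contradiction
    have hgrow : (4 : ℤ) ^ l * (m : ℤ) < 2 ^ (m - m / 3) := by
      exact_mod_cast aux_growth l m hmN
    have hgrow2 : (4 : ℤ) ^ l * (m : ℤ) < P ^ (m - m / 3) :=
      lt_of_lt_of_le hgrow (pow_le_pow_left₀ (by norm_num) hP2 _)
    have hPpos : (0 : ℤ) < P ^ (m / 3) := by positivity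
    have hchain : P ^ m ≤ (4 : ℤ) ^ l * (m : ℤ) * P ^ (m / 3) := by
      have c1 := hlow m hmodd
      rw [hLT] at c1
      have c2 : (2:ℤ) ^ l * |T| ≤ 2 ^ l * ((m : ℤ) * (2 ^ l * P ^ (m / 3))) := by
        have h2l : (0:ℤ) ≤ 2 ^ l := by positivity
        exact mul_le_mul_of_nonneg_left hTbound h2l
      have c3 : (2:ℤ) ^ l * ((m : ℤ) * (2 ^ l * P ^ (m / 3)))
          = (4 : ℤ) ^ l * (m : ℤ) * P ^ (m / 3) := by
        rw [show (4:ℤ) ^ l = 2 ^ l * 2 ^ l by rw [← mul_pow]; norm_num]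
        ring
      linarith
    have hfinal : (4 : ℤ) ^ l * (m : ℤ) * P ^ (m / 3) < P ^ m := by
      calc (4 : ℤ) ^ l * (m : ℤ) * P ^ (m / 3) < P ^ (m - m / 3) * P ^ (m / 3) :=
            mul_lt_mul_of_pos_right hgrow2 hPpos
        _ = P ^ m := by rw [← pow_add]; congr 1; omega
    linarith
  -- relation between ℓ(2m) and ℓ(m)
  have h2m : ∀ m : ℕ, 0 < m → Odd m →
      (∑ r ∈ (2 * m).divisors, ArithmeticFunction.moebius (2 * m / r) * L r)
        = -(∑ r ∈ m.divisors, ArithmeticFunction.moebius (m / r) * L r) := by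
    intro m hm hmodd
    have hsub : m.divisors ⊆ (2 * m).divisors :=
      Nat.divisors_subset_of_dvd (by positivity) ⟨2, by ring⟩
    have e1 : (∑ r ∈ (2 * m).divisors, ArithmeticFunction.moebius (2 * m / r) * L r)
        = ∑ r ∈ m.divisors, ArithmeticFunction.moebius (2 * m / r) * L r := by
      refine (Finset.sum_subset hsub fun r hr hns => ?_).symm
      obtain ⟨hdvd, _⟩ := Nat.mem_divisors.mp hr
      have hnd : ¬ (r ∣ m) := fun h => hns (Nat.mem_divisors.mpr ⟨h, hm.ne'⟩)
      rcases Nat.even_or_odd r with hre | hro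
      · rw [hLeven r hre, mul_zero]
      · exfalso
        refine hnd ?_
        have hco : Nat.Coprime r 2 := Nat.coprime_two_right.mpr hro
        exact hco.dvd_of_dvd_mul_left hdvd
    rw [e1, ← Finset.sum_neg_distrib]
    refine Finset.sum_congr rfl fun r hr => ?_
    obtain ⟨hdvd, _⟩ := Nat.mem_divisors.mp hr
    have hq : 2 * m / r = 2 * (m / r) := Nat.mul_div_assoc 2 hdvd
    have hqodd : Odd (m / r) := hmodd.of_dvd_nat (Nat.div_dvd_of_dvd hdvd)
    have hco : Nat.Coprime 2 (m / r) := Nat.coprime_two_left.mpr hqodd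
    rw [hq, ArithmeticFunction.isMultiplicative_moebius.map_mul_of_coprime hco,
      ArithmeticFunction.moebius_apply_prime Nat.prime_two]
    ring
  refine ⟨part1, 6 * l + 9, by omega, fun m hmN hmodd => ⟨key m hmN hmodd, ?_⟩⟩
  show (∑ r ∈ (2 * m).divisors, ArithmeticFunction.moebius (2 * m / r) * L r) ≠ 0
  rw [h2m m (by omega) hmodd]
  exact neg_ne_zero.mpr (key m hmN hmodd)
end
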